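/- Let k be a field and let g be a finite-dimensional Lie algebra over k equipped with a nondegenerate invariant symmetric bilinear form κ. Let L be a Lie subalgebra of g such that (i) L is a simple Lie algebra, (ii) L is totally isotropic with respect to κ, (iii) 2·dim L = dim g, and (iv) the normalizer of L in g equals L. Then L is a maximal proper subalgebra of g: every Lie subalgebra M of g with L ≤ M satisfies M = L or M = g. -/

import Mathlib

/-- Let `k` be a field and `g` a finite-dimensional Lie algebra over `k` with a
nondegenerate invariant symmetric bilinear form `κ`.  If `L` is a Lie subalgebra of `g`
that is simple, totally isotropic for `κ`, of dimension half that of `g`, and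
self-normalizing, then `L` is a maximal proper subalgebra of `g`. -/
theorem ermolaev_maximality_argument
    {k : Type*} [Field k] {g : Type*} [LieRing g] [LieAlgebra k g]
    [FiniteDimensional k g]
    (κ : g →ₗ[k] g →ₗ[k] k)
    (hsymm : ∀ x y : g, κ x y = κ y x)
    (hinv : ∀ x y z : g, κ ⁅x, y⁆ z = κ x ⁅y, z⁆)
    (hnondeg : ∀ x : g, (∀ y : g, κ x y = 0) → x = 0)
    (L : LieSubalgebra k g)
    (hsimple : LieAlgebra.IsSimple k L)
    (hiso : ∀ u ∈ L, ∀ v ∈ L, κ u v = 0)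
    (hdim : 2 * Module.finrank k L = Module.finrank k g)
    (hnorm : L.normalizer = L) :
    ∀ M : LieSubalgebra k g, L ≤ M → M = L ∨ M = ⊤ := by
  intro M hLM
  set B : LinearMap.BilinForm k g := κ with hB
  have hrefl : B.IsRefl := fun x y h => by rw [hB] at *; rw [hsymm]; exact h
  have hnd : B.Nondegenerate := ⟨hnondeg, fun y h => hnondeg y (fun x => by rw [hsymm]; exact h x)⟩
  have hfinL : Module.finrank k L.toSubmodule = Module.finrank k L := rfl
  -- L is its own orthogonal complement
  have hLsub : L.toSubmodule ≤ B.orthogonal L.toSubmodule := by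
    intro v hv u hu
    exact hiso u hu v hv
  have hfinLperp : Module.finrank k (B.orthogonal L.toSubmodule)
      = Module.finrank k g - Module.finrank k L.toSubmodule :=
    LinearMap.BilinForm.finrank_orthogonal hnd _
  have hLperp : B.orthogonal L.toSubmodule = L.toSubmodule := by
    symm
    apply Submodule.eq_of_le_of_finrank_le hLsub
    rw [hfinLperp, hfinL]
    omega
  -- the orthogonal complement of M
  set W : Submodule k g := B.orthogonal M.toSubmodule with hW
  have hWL : W ≤ L.toSubmodule := by
    rw [← hLperp]
    exact LinearMap.BilinForm.orthogonal_le hLM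
  have hfinW : Module.finrank k W
      = Module.finrank k g - Module.finrank k M.toSubmodule :=
    LinearMap.BilinForm.finrank_orthogonal hnd _
  -- W pulls back to a Lie ideal of L
  have hlie : ∀ (x : L) (m : L), (m : g) ∈ W → ((⁅x, m⁆ : L) : g) ∈ W := by
    intro x m hm y hy
    have hyx : ⁅y, (x : g)⁆ ∈ M := M.lie_mem hy (hLM x.2)
    have : κ ⁅y, (x : g)⁆ (m : g) = 0 := hm _ hyx
    have h2 : κ y ⁅(x : g), (m : g)⁆ = 0 := by rw [← hinv]; exact this
    simpa [LinearMap.BilinForm.IsOrtho] using h2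
  let I : LieIdeal k L :=
    { toSubmodule := W.comap (L.toSubmodule.subtype)
      lie_mem := fun {x m} hm => hlie x m hm }
  have hmemI : ∀ z : L, z ∈ I ↔ (z : g) ∈ W := fun z => Iff.rfl
  rcases hsimple.eq_bot_or_eq_top I with hI | hI
  · -- M^⊥ = 0, so M = g
    right
    have hWbot : W = ⊥ := by
      rw [Submodule.eq_bot_iff]
      intro v hv
      have hvL : v ∈ L.toSubmodule := hWL hv
      have : (⟨v, hvL⟩ : L) ∈ I := (hmemI _).2 hv
      rw [hI] at this
      exact congrArg Subtype.val ((LieSubmodule.mem_bot _).1 this)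
    have : Module.finrank k M.toSubmodule = Module.finrank k g := by
      have h0 : Module.finrank k W = 0 := by rw [hWbot]; exact finrank_bot k g
      have hle : Module.finrank k M.toSubmodule ≤ Module.finrank k g :=
        Submodule.finrank_le _
      omega
    have hMtop : M.toSubmodule = ⊤ := Submodule.eq_top_of_finrank_eq this
    ext x
    simp only [LieSubalgebra.mem_top, iff_true]
    have : x ∈ M.toSubmodule := by rw [hMtop]; trivial
    exact this
  · -- M^⊥ = L, so M = L
    left
    have hLW : L.toSubmodule ≤ W := by
      intro v hv
      have : (⟨v, hv⟩ : L) ∈ I := by rw [hI]; trivial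
      exact (hmemI _).1 this
    have hWeq : W = L.toSubmodule := le_antisymm hWL hLW
    have hfinM : Module.finrank k M.toSubmodule = Module.finrank k L.toSubmodule := by
      have h1 : Module.finrank k W = Module.finrank k L.toSubmodule := by rw [hWeq]
      have hle : Module.finrank k M.toSubmodule ≤ Module.finrank k g :=
        Submodule.finrank_le _
      have hle2 : Module.finrank k L.toSubmodule ≤ Module.finrank k g :=
        Submodule.finrank_le _
      rw [hfinW] at h1
      rw [hfinL] at *
      omega
    have : L.toSubmodule = M.toSubmodule :=
      Submodule.eq_of_le_of_finrank_le hLM hfinM.le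
    ext x
    constructor
    · intro hx
      have : x ∈ L.toSubmodule := by rw [this]; exact hx
      exact this
    · intro hx; exact hLM hx
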